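/- Let X be a δ-hyperbolic length space and let Y, Z be respectively α- and β-quasi-convex subsets of X. For every A ≥ 0, diam(Y^{+A} ∩ Z^{+A}) ≤ diam(Y^{+α+3δ} ∩ Z^{+β+3δ}) + 2A + 4δ. -/

import Mathlib

open Metric Set

/-- The Gromov product of `x` and `y` seen from `z`. -/
noncomputable def gp {X : Type*} [MetricSpace X] (x y z : X) : Real :=
  (dist x z + dist y z - dist x y) / 2

/-- `X` is `δ`-hyperbolic: four-point condition via Gromov products. -/
def IsHyp (X : Type*) [MetricSpace X] (δ : Real) : Prop :=
  ∀ x y z t : X, gp x z t ≥ min (gp x y t) (gp y z t) - δ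

/-- `γ` restricted to `I` is a `(1,l)`-quasi-geodesic parametrized by arclength. -/
def IsQG {X : Type*} [MetricSpace X] (l : Real) (I : Set Real) (γ : Real → X) : Prop :=
  ∀ s ∈ I, ∀ t ∈ I, dist (γ s) (γ t) ≤ |s - t| ∧ |s - t| ≤ dist (γ s) (γ t) + l

/-- `X` is a length space: any two points are joined by `(1,l)`-quasi-geodesics for all `l > 0`. -/
def IsLengthLike (X : Type*) [MetricSpace X] : Prop :=
  ∀ x y : X, ∀ l > (0:Real), ∃ b ≥ (0:Real), ∃ γ : Real → X,
    γ 0 = x ∧ γ b = y ∧ IsQG l (Icc 0 b) γ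

/-- `Y` is `α`-quasi-convex in `X`. -/
def QConvex {X : Type*} [MetricSpace X] (α : Real) (Y : Set X) : Prop :=
  ∀ x : X, ∀ y ∈ Y, ∀ y2 ∈ Y, infDist x Y ≤ gp y y2 x + α

section auxlemmas

variable {X : Type*} [MetricSpace X]

lemma gp_nonneg (x y z : X) : 0 ≤ gp x y z := by
  have h := dist_triangle x z y
  have h2 : dist z y = dist y z := dist_comm z y
  unfold gp; linarith

lemma gp_ge (p q x : X) : dist q x - dist p q ≤ gp p q x := by
  have h := dist_triangle q p x
  have h2 : dist q p = dist p q := dist_comm q p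
  unfold gp; linarith

/-- The key estimate: if `m` is an approximate-geodesic point between `x` and `x'`,
far enough from both, then `m` is close to `Y`. -/
lemma est {δ α A : ℝ} (hδ : 0 ≤ δ) (hα : 0 ≤ α)
    (hX : IsHyp X δ) {Y : Set X} (hY : QConvex α Y) {x x' m : X}
    (hxY : infDist x Y ≤ A) (hx'Y : infDist x' Y ≤ A) {G : ℝ}
    (hG : gp x x' m ≤ G) (hu : A + G + δ ≤ dist x m) (hv : A + G + 2*δ ≤ dist x' m) :
    infDist m Y ≤ α + 2*δ + G := by
  have hG0 : 0 ≤ G := le_trans (gp_nonneg x x' m) hG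
  rcases Y.eq_empty_or_nonempty with hYe | hYne
  · rw [hYe, infDist_empty]; linarith
  · apply le_of_forall_pos_le_add
    intro ε' hε'
    obtain ⟨y, hyY, hy⟩ := (infDist_lt_iff hYne).1
      (lt_of_le_of_lt hxY (show A < A + ε' by linarith))
    obtain ⟨y', hy'Y, hy'⟩ := (infDist_lt_iff hYne).1
      (lt_of_le_of_lt hx'Y (show A < A + ε' by linarith))
    have h1 := hX x y x' m
    have h2 := hX y y' x' m
    have hq := hY m y hyY y' hy'Y
    have hmy : infDist m Y ≤ dist m y := infDist_le_dist_of_mem hyY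
    have hmy' : infDist m Y ≤ dist m y' := infDist_le_dist_of_mem hy'Y
    have e1 : dist m y = 2 * gp x y m + dist x y - dist x m := by
      unfold gp; rw [dist_comm m y]; ring
    have e2 : dist m y' = 2 * gp y' x' m + dist x' y' - dist x' m := by
      unfold gp; rw [dist_comm m y', dist_comm y' x']; ring
    rcases le_or_gt (gp x y m) (G + δ) with ha | ha
    · have : dist m y ≤ G + δ + ε' := by rw [e1]; linarith [hy.le]
      linarith
    · have hmin1 : min (gp x y m) (gp y x' m) ≤ G + δ := by linarith [h1]
      have h3 : gp y x' m ≤ G + δ :=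
        (min_le_iff.mp hmin1).resolve_left (not_le.2 ha)
      have hmin2 : min (gp y y' m) (gp y' x' m) ≤ G + 2*δ := by linarith [h2]
      rcases min_le_iff.mp hmin2 with hb | hc
      · linarith
      · have : dist m y' ≤ G + 2*δ + ε' := by rw [e2]; linarith [hy'.le]
        linarith

/-- In a 0-hyperbolic space, a 1-Lipschitz-parametrized path from `x` to `x'` passes
through an exact geodesic point at any prescribed distance `r` from `x`. -/
lemma exact_point (hX : IsHyp X 0) {b : ℝ} {γ : ℝ → X} {x x' : X}
    (hb : 0 ≤ b) (h0 : γ 0 = x) (hbx : γ b = x')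
    (hLip : ∀ s ∈ Icc (0:ℝ) b, ∀ t ∈ Icc (0:ℝ) b, dist (γ s) (γ t) ≤ |s - t|)
    {r : ℝ} (hr0 : 0 ≤ r) (hrd : r ≤ dist x x') :
    ∃ m : X, dist x m = r ∧ dist x m + dist m x' = dist x x' := by
  rcases eq_or_lt_of_le hr0 with hr | hr
  · exact ⟨x, by simp [← hr], by simp⟩
  · set d := dist x x' with hd
    set φ : ℝ → ℝ := fun t => (dist x (γ t) + d - dist (γ t) x') / 2 with hφ
    have hφlip : ∀ s ∈ Icc (0:ℝ) b, ∀ t ∈ Icc (0:ℝ) b, |φ s - φ t| ≤ |s - t| := by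
      intro s hs t ht
      have h1 := abs_dist_sub_le (γ s) (γ t) x
      have h2 := abs_dist_sub_le (γ s) (γ t) x'
      have h3 := hLip s hs t ht
      rw [dist_comm (γ s) x, dist_comm (γ t) x] at h1
      rw [abs_le] at h1 h2 ⊢
      constructor
      · simp only [hφ]; have := h1.1; have := h2.2; linarith [h1.1, h2.2]
      · simp only [hφ]; linarith [h1.2, h2.1]
    have hφ0 : φ 0 = 0 := by
      simp only [hφ, h0, dist_self]
      have : dist x x' = d := hd.symm
      rw [dist_comm x x'] at this ⊢
      rw [this]; ring
    have hφb : φ b = d := by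
      simp only [hφ, hbx, dist_self, ← hd]; ring
    set T : Set ℝ := {t | t ∈ Icc (0:ℝ) b ∧ r ≤ φ t} with hT
    have hbT : b ∈ T := ⟨⟨hb, le_refl b⟩, by rw [hφb]; exact hrd⟩
    have hTne : T.Nonempty := ⟨b, hbT⟩
    have hTbdd : BddBelow T := ⟨0, fun t ht => ht.1.1⟩
    set t₀ : ℝ := sInf T with ht₀
    have ht₀le : ∀ t ∈ T, t₀ ≤ t := fun t ht => csInf_le hTbdd ht
    have ht₀0 : 0 ≤ t₀ := le_csInf hTne fun t ht => ht.1.1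
    have ht₀b : t₀ ≤ b := ht₀le b hbT
    have ht₀Icc : t₀ ∈ Icc (0:ℝ) b := ⟨ht₀0, ht₀b⟩
    have hrφ : r ≤ φ t₀ := by
      apply le_of_forall_pos_le_add
      intro ε hε
      obtain ⟨a, haT, ha⟩ := Real.lt_sInf_add_pos hTne hε
      have h1 : t₀ ≤ a := ht₀le a haT
      have h2 := hφlip a haT.1 t₀ ht₀Icc
      have h3 : |a - t₀| = a - t₀ := abs_of_nonneg (by linarith)
      rw [h3, abs_le] at h2
      have h4 := haT.2
      rw [← ht₀] at ha
      linarith [h2.2]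
    have ht₀pos : 0 < t₀ := by
      rcases lt_or_eq_of_le ht₀0 with h | h
      · exact h
      · exfalso; rw [← h, hφ0] at hrφ; linarith
    have key : ∀ e, 0 < e → (∀ s, s ∈ Icc (0:ℝ) b → |s - t₀| < e → r ≤ φ s) → False := by
      intro e he hs
      set s := max 0 (t₀ - e/2) with hsdef
      have hs0 : 0 ≤ s := le_max_left _ _
      have hsb : s ≤ b := max_le hb (by linarith)
      have hst : s < t₀ := by
        rcases le_or_gt 0 (t₀ - e/2) with h | h
        · rw [hsdef, max_eq_right h]; linarith
        · rw [hsdef, max_eq_left h.le]; linarith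
      have habs : |s - t₀| < e := by
        rw [abs_of_nonpos (by linarith)]
        rcases le_or_gt 0 (t₀ - e/2) with h | h
        · rw [hsdef, max_eq_right h]; linarith
        · rw [hsdef, max_eq_left h.le]; linarith
      have hmem : s ∈ T := ⟨⟨hs0, hsb⟩, hs s ⟨hs0, hsb⟩ habs⟩
      have := ht₀le s hmem
      linarith
    have hφr : φ t₀ ≤ r := by
      by_contra hcon
      push_neg at hcon
      refine key (φ t₀ - r) (by linarith) ?_
      intro s hsI habs
      have h2 := hφlip t₀ ht₀Icc s hsI
      rw [abs_sub_comm t₀ s] at h2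
      rw [abs_le] at h2
      linarith [h2.2]
    have hφeq : φ t₀ = r := le_antisymm hφr hrφ
    set m := γ t₀ with hm
    have hgnn : d ≤ dist x m + dist m x' := dist_triangle x m x'
    have hkey2 : dist x m + dist m x' ≤ d := by
      by_contra hcon
      push_neg at hcon
      set g := (dist x m + dist m x' - d)/2 with hg
      have hgpos : 0 < g := by rw [hg]; linarith
      refine key g hgpos ?_
      intro s hsI habs
      have h4 := hX (γ s) m x' x
      have hge := gp_ge (γ s) m x
      have hls := hLip s hsI t₀ ht₀Icc
      have id1 : gp (γ s) x' x = φ s := by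
        unfold gp; simp only [hφ]
        rw [dist_comm (γ s) x, dist_comm x' x, ← hd]
      have id2 : gp m x' x = φ t₀ := by
        unfold gp; simp only [hφ]
        rw [dist_comm m x, dist_comm x' x, ← hd]
      rw [id1, id2] at h4
      have hmx : dist m x = dist x m := dist_comm m x
      have e3 : φ t₀ = (dist x m + d - dist m x')/2 := rfl
      -- gp (γ s) m x ≥ dist m x - dist (γ s) m > dist x m - g = φ t₀ = r
      have h5 : r ≤ gp (γ s) m x := by
        have : dist (γ s) m < g := lt_of_le_of_lt hls habs
        rw [hφeq] at e3
        linarith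
      have h6 : r ≤ min (gp (γ s) m x) (φ t₀) := le_min h5 (by rw [hφeq])
      linarith [h4]
    have heq : dist x m + dist m x' = d := le_antisymm hkey2 hgnn
    have e3 : φ t₀ = (dist x m + d - dist m x')/2 := rfl
    rw [hφeq] at e3
    exact ⟨m, by linarith, by rw [heq]⟩

/-- Main construction: a point of the core near `x`. -/
lemma core_lemma {δ α β A ε : ℝ} (hδ : 0 ≤ δ)
    (hα : 0 ≤ α) (hβ : 0 ≤ β) (hA : 0 ≤ A) (hε : 0 < ε)
    (hX : IsHyp X δ) (hlen : IsLengthLike X)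
    {Y Z : Set X} (hY : QConvex α Y) (hZ : QConvex β Z) (x x' : X)
    (hxY : infDist x Y ≤ A) (hx'Y : infDist x' Y ≤ A)
    (hxZ : infDist x Z ≤ A) (hx'Z : infDist x' Z ≤ A)
    (hd : 2*A + 4*δ + ε < dist x x') :
    ∃ m, infDist m Y ≤ α + 3*δ ∧ infDist m Z ≤ β + 3*δ ∧ dist x m ≤ A + 2*δ + ε/2 := by
  rcases eq_or_lt_of_le hδ with hδ0 | hδpos
  · -- δ = 0 : use an exact geodesic point
    subst hδ0
    obtain ⟨b, hb, γ, h0, hbx, hQG⟩ := hlen x x' 1 one_pos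
    have hLip : ∀ s ∈ Icc (0:ℝ) b, ∀ t ∈ Icc (0:ℝ) b, dist (γ s) (γ t) ≤ |s - t| :=
      fun s hs t ht => (hQG s hs t ht).1
    obtain ⟨m, hm1, hm2⟩ := exact_point hX hb h0 hbx hLip hA (by linarith)
    have hcm : dist x' m = dist m x' := dist_comm x' m
    have hgp : gp x x' m ≤ 0 := by
      unfold gp; rw [dist_comm x' m]; linarith
    have hu : A + 0 + 0 ≤ dist x m := by rw [hm1]; linarith
    have hv : A + 0 + 2*0 ≤ dist x' m := by rw [hcm]; linarith
    have hYest := est (le_refl 0) hα hX hY hxY hx'Y hgp hu hv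
    have hZest := est (le_refl 0) hβ hX hZ hxZ hx'Z hgp hu hv
    exact ⟨m, by linarith, by linarith, by rw [hm1]; linarith⟩
  · -- δ > 0
    set l := min δ (ε/8) with hl
    have hlpos : 0 < l := lt_min hδpos (by linarith)
    have hlδ : l ≤ δ := min_le_left _ _
    have hlε : l ≤ ε/8 := min_le_right _ _
    obtain ⟨b, hb, γ, h0, hbx, hQG⟩ := hlen x x' l hlpos
    have hQ0b := hQG 0 ⟨le_refl 0, hb⟩ b ⟨hb, le_refl b⟩
    rw [h0, hbx] at hQ0b
    have habs0b : |(0:ℝ) - b| = b := by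
      rw [abs_sub_comm, sub_zero]; exact abs_of_nonneg hb
    rw [habs0b] at hQ0b
    have hdb : dist x x' ≤ b := hQ0b.1
    have hbd : b ≤ dist x x' + l := hQ0b.2
    set t := A + δ + 2*l with ht
    have ht0 : 0 ≤ t := by rw [ht]; linarith
    have htb : t ≤ b := by
      have : t ≤ A + δ + ε/4 := by rw [ht]; linarith
      linarith
    have hQt0 := hQG t ⟨ht0, htb⟩ 0 ⟨le_refl 0, hb⟩
    rw [h0] at hQt0
    have habst : |t - 0| = t := by rw [sub_zero]; exact abs_of_nonneg ht0
    rw [habst] at hQt0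
    have hQtb := hQG t ⟨ht0, htb⟩ b ⟨hb, le_refl b⟩
    rw [hbx] at hQtb
    have habstb : |t - b| = b - t := by
      rw [abs_sub_comm]; exact abs_of_nonneg (by linarith)
    rw [habstb] at hQtb
    set m := γ t with hm
    have hu1 : dist x m ≤ t := by rw [dist_comm]; exact hQt0.1
    have hu2 : t ≤ dist x m + l := by
      rw [dist_comm x m]; exact hQt0.2
    have hv1 : dist m x' ≤ b - t := hQtb.1
    have htri : dist x x' ≤ dist x m + dist m x' := dist_triangle x m x'
    have hcm : dist x' m = dist m x' := dist_comm x' m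
    have hgp : gp x x' m ≤ l/2 := by
      unfold gp; rw [dist_comm x' m]; linarith
    have hu : A + l/2 + δ ≤ dist x m := by linarith
    have hv : A + l/2 + 2*δ ≤ dist x' m := by rw [hcm]; linarith
    have hYest := est hδ hα hX hY hxY hx'Y hgp hu hv
    have hZest := est hδ hβ hX hZ hxZ hx'Z hgp hu hv
    exact ⟨m, by linarith, by linarith, by linarith⟩

end auxlemmas

theorem stmt11 {X : Type*} [MetricSpace X] {δ α β A : Real} (hδ : 0 ≤ δ)
    (hα : 0 ≤ α) (hβ : 0 ≤ β) (hA : 0 ≤ A) (hX : IsHyp X δ) (hlen : IsLengthLike X)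
    {Y Z : Set X} (hY : QConvex α Y) (hZ : QConvex β Z) :
    EMetric.diam (({x : X | infDist x Y ≤ A} ∩ {x : X | infDist x Z ≤ A}) : Set X) ≤
      EMetric.diam (({x : X | infDist x Y ≤ α + 3 * δ} ∩
        {x : X | infDist x Z ≤ β + 3 * δ}) : Set X) + ENNReal.ofReal (2 * A + 4 * δ) := by
  set core := (({x : X | infDist x Y ≤ α + 3 * δ} ∩
        {x : X | infDist x Z ≤ β + 3 * δ}) : Set X) with hcore
  apply EMetric.diam_le
  intro x hx x' hx'
  obtain ⟨hxY, hxZ⟩ := hx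
  obtain ⟨hx'Y, hx'Z⟩ := hx'
  simp only [mem_setOf_eq] at hxY hxZ hx'Y hx'Z
  apply ENNReal.le_of_forall_pos_le_add
  intro ε hε _
  have hεR : (0:ℝ) < (ε:ℝ) := hε
  have key : edist x x' ≤ EMetric.diam core + ENNReal.ofReal (2*A + 4*δ + (ε:ℝ)) := by
    rcases le_or_gt (dist x x') (2*A + 4*δ + (ε:ℝ)) with hcase | hcase
    · calc edist x x' = ENNReal.ofReal (dist x x') := edist_dist x x'
        _ ≤ ENNReal.ofReal (2*A+4*δ+(ε:ℝ)) := ENNReal.ofReal_le_ofReal hcase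
        _ ≤ _ := le_add_self
    · obtain ⟨m, hmY, hmZ, hxm⟩ :=
        core_lemma hδ hα hβ hA hεR hX hlen hY hZ x x' hxY hx'Y hxZ hx'Z hcase
      obtain ⟨m', hm'Y, hm'Z, hx'm'⟩ :=
        core_lemma hδ hα hβ hA hεR hX hlen hY hZ x' x hx'Y hxY hx'Z hxZ
          (by rw [dist_comm]; exact hcase)
      have htri : dist x x' ≤ dist m m' + (2*A + 4*δ + (ε:ℝ)) := by
        have t1 := dist_triangle x m x'
        have t2 := dist_triangle m m' x'
        have hc : dist m' x' = dist x' m' := dist_comm _ _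
        linarith
      have hmem : m ∈ core := ⟨hmY, hmZ⟩
      have hmem' : m' ∈ core := ⟨hm'Y, hm'Z⟩
      calc edist x x' = ENNReal.ofReal (dist x x') := edist_dist x x'
        _ ≤ ENNReal.ofReal (dist m m' + (2*A+4*δ+(ε:ℝ))) := ENNReal.ofReal_le_ofReal htri
        _ ≤ ENNReal.ofReal (dist m m') + ENNReal.ofReal (2*A+4*δ+(ε:ℝ)) := ENNReal.ofReal_add_le
        _ = edist m m' + ENNReal.ofReal (2*A+4*δ+(ε:ℝ)) := by rw [edist_dist]
        _ ≤ EMetric.diam core + ENNReal.ofReal (2*A+4*δ+(ε:ℝ)) :=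
            add_le_add_left (EMetric.edist_le_diam_of_mem hmem hmem') _
  calc edist x x' ≤ EMetric.diam core + ENNReal.ofReal (2*A+4*δ+(ε:ℝ)) := key
    _ ≤ EMetric.diam core + (ENNReal.ofReal (2*A+4*δ) + ENNReal.ofReal (ε:ℝ)) :=
        add_le_add_right ENNReal.ofReal_add_le _
    _ = EMetric.diam core + ENNReal.ofReal (2*A+4*δ) + (ε : ENNReal) := by
        rw [ENNReal.ofReal_coe_nnreal, add_assoc]
    _ = EMetric.diam core + ENNReal.ofReal (2*A + 4*δ) + (ε : ENNReal) := rfl
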